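/- Let a > 0 and θ ∈ (0, π/2). Then there exists a constant C > 0, depending only on a and θ, such that for every s ∈ ℝ and every w ∈ ℂ with w ≠ 0 and 0 ≤ Arg(w) ≤ θ, one has Im(R(w, τ_θ(s) − a)) ≥ (cos(θ − Arg(w)))^{1/2} · Im(w) − C, where R(ŵ,ζ) := (ŵ² + ζ²)^{1/2}. -/

import Mathlib

open Complex Real

/-- The complex path `τ_θ` associated with the square `(-a,a)²`. -/
noncomputable def tauPath (a θ s : ℝ) : ℂ :=
  if s < -a then -(a : ℂ) + ((s + a : ℝ) : ℂ) * Complex.exp (θ * Complex.I)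
  else if s ≤ a then (s : ℂ)
  else (a : ℂ) + ((s - a : ℝ) : ℂ) * Complex.exp (θ * Complex.I)

/-- The principal square root `R(ŵ,ζ) := (ŵ² + ζ²)^{1/2}`. -/
noncomputable def Rc (w ζ : ℂ) : ℂ := (w ^ 2 + ζ ^ 2) ^ ((1 : ℂ) / 2)

/-- imaginary part of principal square root for z in closed upper half plane -/
lemma halfIm (z : ℂ) (hz : 0 ≤ z.im) :
    (z ^ ((1:ℂ)/2)).im = Real.sqrt ((‖z‖ - z.re)/2) := by
  rcases eq_or_ne z 0 with rfl|h0
  · simp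
  · have habs : (0:ℝ) < ‖z‖ := norm_pos_iff.mpr h0
    have harg0 : 0 ≤ z.arg := Complex.arg_nonneg_iff.mpr hz
    have hargpi : z.arg ≤ π := Complex.arg_le_pi z
    rw [Complex.cpow_def_of_ne_zero h0, Complex.exp_im]
    have hre : (Complex.log z * (1/2)).re = Real.log (‖z‖) * (1/2) := by
      simp [Complex.mul_re, Complex.log_re, Complex.log_im]
    have him : (Complex.log z * (1/2)).im = z.arg / 2 := by
      simp [Complex.mul_im, Complex.log_re, Complex.log_im]
      ring
    rw [hre, him]
    have hexp : Real.exp (Real.log (‖z‖) * (1/2)) = Real.sqrt (‖z‖) := by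
      rw [Real.sqrt_eq_rpow, Real.rpow_def_of_pos habs]
    have hsin2 : Real.sin (z.arg/2)^2 = (1 - Real.cos z.arg)/2 := by
      have h := Real.cos_sq (z.arg/2)
      have h2 := Real.sin_sq_add_cos_sq (z.arg/2)
      have h3 : 2*(z.arg/2) = z.arg := by ring
      rw [h3] at h; linarith
    have hsinnn : 0 ≤ Real.sin (z.arg/2) := by
      apply Real.sin_nonneg_of_nonneg_of_le_pi <;> [linarith; linarith [Real.pi_pos]]
    have hsin : Real.sin (z.arg/2) = Real.sqrt ((1 - Real.cos z.arg)/2) := by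
      rw [← Real.sqrt_sq hsinnn, hsin2]
    rw [hexp, hsin, ← Real.sqrt_mul habs.le]
    congr 1
    rw [Complex.cos_arg h0]
    field_simp

lemma halfSq (z : ℂ) : (z ^ ((1:ℂ)/2))^2 = z := by
  have h : ((1:ℂ)/2) = ((2:ℕ):ℂ)⁻¹ := by norm_num
  rw [h, Complex.cpow_nat_inv_pow z two_ne_zero]

lemma halfRe_nonneg (z : ℂ) : 0 ≤ (z ^ ((1:ℂ)/2)).re := by
  rcases eq_or_ne z 0 with rfl|h0
  · simp
  · rw [Complex.cpow_def_of_ne_zero h0, Complex.exp_re]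
    have hre : (Complex.log z * (1/2)).im = z.arg / 2 := by
      simp [Complex.mul_im, Complex.log_re, Complex.log_im]; ring
    rw [hre]
    apply mul_nonneg (Real.exp_pos _).le
    apply Real.cos_nonneg_of_mem_Icc
    constructor
    · linarith [Complex.neg_pi_lt_arg z]
    · linarith [Complex.arg_le_pi z]

lemma halfIm_nonneg (z : ℂ) (hz : 0 ≤ z.im) : 0 ≤ (z ^ ((1:ℂ)/2)).im := by
  rw [halfIm z hz]; exact Real.sqrt_nonneg _

lemma quadAdd (p q : ℂ) (hp1 : 0 ≤ p.re) (hp2 : 0 ≤ p.im) (hq1 : 0 ≤ q.re) (hq2 : 0 ≤ q.im) :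
    ‖p - q‖ ≤ ‖p + q‖ ∧ ‖q‖ ≤ ‖p + q‖ := by
  have h1 : Complex.normSq (p - q) ≤ Complex.normSq (p + q) := by
    simp only [Complex.normSq_apply, Complex.add_re, Complex.add_im, Complex.sub_re,
      Complex.sub_im]
    nlinarith [mul_nonneg hp1 hq1, mul_nonneg hp2 hq2]
  have h2 : Complex.normSq q ≤ Complex.normSq (p + q) := by
    simp only [Complex.normSq_apply, Complex.add_re, Complex.add_im]
    nlinarith [mul_nonneg hp1 hq1, mul_nonneg hp2 hq2, sq_nonneg p.re, sq_nonneg p.im]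
  constructor
  · rw [Complex.norm_def, Complex.norm_def]; exact Real.sqrt_le_sqrt h1
  · rw [Complex.norm_def, Complex.norm_def]; exact Real.sqrt_le_sqrt h2

/-- Lipschitz-type bound for principal sqrt on the closed upper half plane -/
lemma halfLip (u v : ℂ) (hu : 0 ≤ u.im) (hv : 0 ≤ v.im) :
    ‖u ^ ((1:ℂ)/2) - v ^ ((1:ℂ)/2)‖ ≤ Real.sqrt (‖u - v‖) := by
  set p := u ^ ((1:ℂ)/2) with hp
  set q := v ^ ((1:ℂ)/2) with hq
  have hmul : (p - q) * (p + q) = u - v := by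
    have h1 : p^2 = u := halfSq u
    have h2 : q^2 = v := halfSq v
    rw [← h1, ← h2]; ring
  have habs : ‖p - q‖ * ‖p + q‖ = ‖u - v‖ := by
    rw [← norm_mul, hmul]
  have hle : ‖p - q‖ ≤ ‖p + q‖ :=
    (quadAdd p q (halfRe_nonneg u) (halfIm_nonneg u hu) (halfRe_nonneg v) (halfIm_nonneg v hv)).1
  apply (Real.le_sqrt (norm_nonneg _) (norm_nonneg _)).mpr
  calc ‖p - q‖ ^ 2 = ‖p-q‖ * ‖p-q‖ := by ring
    _ ≤ ‖p-q‖ * ‖p+q‖ := by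
        apply mul_le_mul_of_nonneg_left hle (norm_nonneg _)
    _ = ‖u - v‖ := habs

lemma keyM (A B cp sp ct st : ℝ) (hA : 0 ≤ A) (hB : 0 ≤ B)
    (h1 : cp^2 + sp^2 = 1) (h2 : ct^2 + st^2 = 1)
    (hsp : 0 ≤ sp) (hcp : 0 ≤ cp) (hst : 0 ≤ st) (hct : 0 < ct)
    (hd : 0 ≤ st*cp - ct*sp) :
    A*(cp^2-sp^2) + B*(ct^2-st^2) + 2*((ct*cp+st*sp)*(A*sp^2)) ≤
      Real.sqrt ((A*(cp^2-sp^2)+B*(ct^2-st^2))^2 + (2*(A*(cp*sp)) + 2*(B*(ct*st)))^2) := by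
  have hc0 : (0:ℝ) ≤ ct*cp + st*sp := by positivity
  have hc1 : ct*cp + st*sp ≤ 1 := by nlinarith [sq_nonneg (ct-cp), sq_nonneg (st-sp)]
  have hg : 0 ≤ 2*ct*st*cp - (ct*cp+st*sp)*(ct^2-st^2)*sp := by
    rcases le_or_gt (ct^2-st^2) 0 with h|h
    · have h3 : 0 ≤ (ct*cp+st*sp)*sp*(st^2-ct^2) :=
        mul_nonneg (mul_nonneg hc0 hsp) (by linarith)
      nlinarith [mul_nonneg (mul_nonneg hct.le hst) hcp]
    · have h5 : (ct*cp+st*sp)*(ct^2-st^2)*sp*ct ≤ (ct^2-st^2)*sp*ct := by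
        nlinarith [mul_nonneg (mul_nonneg h.le hsp) hct.le]
      have h6 : (ct^2-st^2)*sp*ct ≤ (ct^2-st^2)*(st*cp) := by
        nlinarith [h.le, hd]
      have h7 : 0 ≤ ct * (2*ct*st*cp - (ct*cp+st*sp)*(ct^2-st^2)*sp) := by
        nlinarith [mul_nonneg hst hcp]
      nlinarith [h7, hct]
  have t1 : 0 ≤ A^2*(sp^2*((1-(ct*cp+st*sp))*(cp^2+(ct*cp+st*sp)*sp^2))) := by
    apply mul_nonneg (sq_nonneg _)
    apply mul_nonneg (sq_nonneg _)
    apply mul_nonneg (by linarith)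
    have := mul_nonneg hc0 (sq_nonneg sp)
    nlinarith [sq_nonneg cp]
  have t2 : 0 ≤ B^2*(ct^2*st^2) := by positivity
  have t3 : 0 ≤ A*B*(sp*(2*ct*st*cp - (ct*cp+st*sp)*(ct^2-st^2)*sp)) :=
    mul_nonneg (mul_nonneg hA hB) (mul_nonneg hsp hg)
  have expand : ((A*(cp^2-sp^2)+B*(ct^2-st^2))^2 + (2*(A*(cp*sp)) + 2*(B*(ct*st)))^2)
      - (A*(cp^2-sp^2) + B*(ct^2-st^2) + 2*((ct*cp+st*sp)*(A*sp^2)))^2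
      = 4*(A^2*(sp^2*((1-(ct*cp+st*sp))*(cp^2+(ct*cp+st*sp)*sp^2)))
          + B^2*(ct^2*st^2)
          + A*B*(sp*(2*ct*st*cp - (ct*cp+st*sp)*(ct^2-st^2)*sp))) := by ring
  rcases le_or_gt (A*(cp^2-sp^2) + B*(ct^2-st^2) + 2*((ct*cp+st*sp)*(A*sp^2))) 0 with hL0|hL0
  · exact le_trans hL0 (Real.sqrt_nonneg _)
  · apply (Real.le_sqrt hL0.le (by positivity)).mpr
    linarith [expand, t1, t2, t3]

lemma keyC (θ : ℝ) (w : ℂ) (t : ℝ) (hw : w ≠ 0) (h0 : 0 ≤ w.arg) (hθw : w.arg ≤ θ)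
    (hθ₀ : 0 < θ) (hθ₁ : θ < π/2) :
    Real.sqrt (Real.cos (θ - w.arg)) * w.im ≤
      ((w^2 + (((t:ℝ):ℂ) * Complex.exp ((θ:ℝ) * Complex.I))^2) ^ ((1:ℂ)/2)).im := by
  have hpi := Real.pi_pos
  set z := w^2 + (((t:ℝ):ℂ) * Complex.exp ((θ:ℝ) * Complex.I))^2 with hz
  have hr : (0:ℝ) < ‖w‖ := norm_pos_iff.mpr hw
  have hx : w.re = ‖w‖ * Real.cos w.arg := by
    rw [Complex.cos_arg hw]; field_simp
  have hy : w.im = ‖w‖ * Real.sin w.arg := by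
    rw [Complex.sin_arg]; field_simp
  have hyn : 0 ≤ w.im := Complex.arg_nonneg_iff.mp h0
  have hxn : 0 ≤ w.re := by
    apply Complex.abs_arg_le_pi_div_two_iff.mp
    rw [_root_.abs_of_nonneg h0]; linarith
  have hsp : 0 ≤ Real.sin w.arg := Real.sin_nonneg_of_nonneg_of_le_pi h0 (by linarith)
  have hcp : 0 ≤ Real.cos w.arg := Real.cos_nonneg_of_mem_Icc ⟨by linarith, by linarith⟩
  have hst : 0 < Real.sin θ := Real.sin_pos_of_pos_of_lt_pi hθ₀ (by linarith)
  have hct : 0 < Real.cos θ := Real.cos_pos_of_mem_Ioo ⟨by linarith, hθ₁⟩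
  have hd : 0 ≤ Real.sin θ * Real.cos w.arg - Real.cos θ * Real.sin w.arg := by
    rw [← Real.sin_sub]
    exact Real.sin_nonneg_of_nonneg_of_le_pi (by linarith) (by linarith)
  have hzre : z.re = (‖w‖)^2*((Real.cos w.arg)^2-(Real.sin w.arg)^2)
      + t^2*((Real.cos θ)^2-(Real.sin θ)^2) := by
    simp only [hz, Complex.add_re, pow_two, Complex.mul_re, Complex.mul_im,
      Complex.ofReal_re, Complex.ofReal_im, Complex.exp_ofReal_mul_I_re,
      Complex.exp_ofReal_mul_I_im]
    rw [hx, hy]; ring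
  have hzim : z.im = 2*((‖w‖)^2*(Real.cos w.arg * Real.sin w.arg))
      + 2*(t^2*(Real.cos θ * Real.sin θ)) := by
    simp only [hz, Complex.add_im, pow_two, Complex.mul_re, Complex.mul_im,
      Complex.ofReal_re, Complex.ofReal_im, Complex.exp_ofReal_mul_I_re,
      Complex.exp_ofReal_mul_I_im]
    rw [hx, hy]; ring
  have hzimn : 0 ≤ z.im := by
    rw [hzim]
    have := mul_nonneg hxn hyn
    nlinarith [sq_nonneg t, mul_pos hct hst, mul_nonneg (sq_nonneg t) (mul_pos hct hst).le,
      mul_nonneg hcp hsp, mul_nonneg (sq_nonneg (‖w‖)) (mul_nonneg hcp hsp)]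
  have habs : ‖z‖ = Real.sqrt (z.re^2 + z.im^2) := by
    rw [Complex.norm_def, Complex.normSq_apply]; ring_nf
  have hkey := keyM ((‖w‖)^2) (t^2) (Real.cos w.arg) (Real.sin w.arg)
      (Real.cos θ) (Real.sin θ) (sq_nonneg _) (sq_nonneg _)
      (by rw [add_comm]; exact Real.sin_sq_add_cos_sq _)
      (by rw [add_comm]; exact Real.sin_sq_add_cos_sq _)
      hsp hcp hst.le hct hd
  have hmain : Real.cos (θ - w.arg) * w.im^2 ≤ (‖z‖ - z.re)/2 := by
    have e1 : Real.cos (θ - w.arg) = Real.cos θ * Real.cos w.arg + Real.sin θ * Real.sin w.arg :=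
      Real.cos_sub θ w.arg
    have e2 : ‖z‖ = Real.sqrt ((( ‖w‖)^2*((Real.cos w.arg)^2-(Real.sin w.arg)^2)
        + t^2*((Real.cos θ)^2-(Real.sin θ)^2))^2
        + (2*((‖w‖)^2*(Real.cos w.arg * Real.sin w.arg))
          + 2*(t^2*(Real.cos θ * Real.sin θ)))^2) := by
      rw [habs, hzre, hzim]
    have hly : w.im^2 = (‖w‖)^2 * (Real.sin w.arg)^2 := by rw [hy]; ring
    rw [e1, hly, hzre, e2]
    linarith [hkey]
  rw [halfIm z hzimn]
  have hcosd : 0 ≤ Real.cos (θ - w.arg) := by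
    apply (Real.cos_pos_of_mem_Ioo ⟨by linarith, by linarith⟩).le
  calc Real.sqrt (Real.cos (θ - w.arg)) * w.im
      = Real.sqrt (Real.cos (θ - w.arg) * w.im^2) := by
        rw [Real.sqrt_mul hcosd, Real.sqrt_sq hyn]
    _ ≤ Real.sqrt ((‖z‖ - z.re)/2) := Real.sqrt_le_sqrt hmain

set_option maxHeartbeats 2000000 in
/-- Let `a > 0` and `θ ∈ (0, π/2)`. Then there exists a constant `C > 0`, depending only
on `a` and `θ`, such that for every `s ∈ ℝ` and every `w ≠ 0` with `0 ≤ Arg w ≤ θ`,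
`Im(R(w, τ_θ(s) − a)) ≥ (cos(θ − Arg w))^{1/2} · Im w − C`. -/
theorem stmt_7 (a θ : ℝ) (ha : 0 < a) (hθ₀ : 0 < θ) (hθ₁ : θ < π / 2) :
    ∃ C > (0 : ℝ), ∀ (s : ℝ) (w : ℂ), w ≠ 0 → 0 ≤ w.arg → w.arg ≤ θ →
      Real.sqrt (Real.cos (θ - w.arg)) * w.im - C ≤
        (Rc w (tauPath a θ s - (a : ℂ))).im := by
  have hpi := Real.pi_pos
  have hst : 0 < Real.sin θ := Real.sin_pos_of_pos_of_lt_pi hθ₀ (by linarith)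
  have hct : 0 < Real.cos θ := Real.cos_pos_of_mem_Ioo ⟨by linarith, hθ₁⟩
  set C : ℝ := 2*a + Real.sqrt (4*a^2+4*a) + (4*a^2+4*a)/Real.sqrt (2*(Real.cos θ * Real.sin θ)) + 1
    with hCdef
  have hsq1 : 0 ≤ Real.sqrt (4*a^2+4*a) := Real.sqrt_nonneg _
  have hsq2 : 0 ≤ (4*a^2+4*a)/Real.sqrt (2*(Real.cos θ * Real.sin θ)) := by positivity
  have hCpos : 0 < C := by rw [hCdef]; positivity
  refine ⟨C, hCpos, ?_⟩
  intro s w hw h0 hθw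
  have hyn : 0 ≤ w.im := Complex.arg_nonneg_iff.mp h0
  have hxn : 0 ≤ w.re := by
    apply Complex.abs_arg_le_pi_div_two_iff.mp
    rw [_root_.abs_of_nonneg h0]; linarith
  have hw2im : (w^2).im = 2*(w.re*w.im) := by
    simp [pow_two, Complex.mul_im]; ring
  have hw2imn : 0 ≤ (w^2).im := by
    rw [hw2im]; have := mul_nonneg hxn hyn; linarith
  have hsub1 : Real.sqrt (Real.cos (θ - w.arg)) ≤ 1 :=
    Real.sqrt_le_one.mpr (Real.cos_le_one _)
  have hsC : Real.sqrt (Real.cos (θ - w.arg)) * w.im ≤ w.im :=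
    mul_le_of_le_one_left hyn hsub1
  simp only [Rc, tauPath]
  split_ifs with h1 h2
  -- Case s < -a
  · set t : ℝ := -(s+a) with htdef
    have ht : (0:ℝ) < t := by rw [htdef]; linarith
    set u : ℂ := w ^ 2 + (-(a:ℂ) + ((s + a : ℝ) : ℂ) * Complex.exp ((θ:ℝ) * Complex.I) - (a:ℂ)) ^ 2
      with hu
    set v : ℂ := w ^ 2 + (((t:ℝ):ℂ) * Complex.exp ((θ:ℝ) * Complex.I)) ^ 2 with hv
    have hzeta : -(a:ℂ) + ((s + a : ℝ) : ℂ) * Complex.exp ((θ:ℝ) * Complex.I) - (a:ℂ)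
        = -(2*(a:ℂ)) - ((t:ℝ):ℂ) * Complex.exp ((θ:ℝ) * Complex.I) := by
      rw [htdef]; push_cast; ring
    have huv : u - v = ((4*a^2 : ℝ):ℂ) + ((4*a*t : ℝ):ℂ) * Complex.exp ((θ:ℝ)*Complex.I) := by
      rw [hu, hv, hzeta]; push_cast; ring
    have habsuv : ‖u - v‖ ≤ 4*a^2 + 4*a*t := by
      rw [huv]
      calc ‖((4*a^2 : ℝ):ℂ) + ((4*a*t : ℝ):ℂ) * Complex.exp ((θ:ℝ)*Complex.I)‖
          ≤ ‖((4*a^2 : ℝ):ℂ)‖ + ‖((4*a*t : ℝ):ℂ) * Complex.exp ((θ:ℝ)*Complex.I)‖ :=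
            norm_add_le _ _
        _ = 4*a^2 + 4*a*t := by
            rw [norm_mul, Complex.norm_exp_ofReal_mul_I, Complex.norm_real, Complex.norm_real,
              Real.norm_eq_abs, Real.norm_eq_abs,
              _root_.abs_of_nonneg (by positivity : (0:ℝ) ≤ 4*a^2),
              _root_.abs_of_nonneg (by positivity : (0:ℝ) ≤ 4*a*t)]
            ring
    have hzre : (-(2*(a:ℂ)) - ((t:ℝ):ℂ) * Complex.exp ((θ:ℝ) * Complex.I)).re
        = -(2*a) - t*Real.cos θ := by
      simp [Complex.mul_re, Complex.exp_ofReal_mul_I_re, Complex.exp_ofReal_mul_I_im]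
    have hzim2 : (-(2*(a:ℂ)) - ((t:ℝ):ℂ) * Complex.exp ((θ:ℝ) * Complex.I)).im
        = -(t*Real.sin θ) := by
      simp [Complex.mul_im, Complex.exp_ofReal_mul_I_re, Complex.exp_ofReal_mul_I_im]
    have himu : 0 ≤ u.im := by
      rw [hu, hzeta, Complex.add_im]
      have : ((-(2*(a:ℂ)) - ((t:ℝ):ℂ) * Complex.exp ((θ:ℝ) * Complex.I)) ^ 2).im
          = 2*((-(2*a) - t*Real.cos θ) * (-(t*Real.sin θ))) := by
        rw [pow_two, Complex.mul_im, hzre, hzim2]; ring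
      rw [this, hw2im]
      have e1 : 0 ≤ (2*a + t*Real.cos θ) * (t*Real.sin θ) := by positivity
      have e2 := mul_nonneg hxn hyn
      nlinarith [e1, e2]
    have himv : 0 ≤ v.im ∧ 2*(Real.cos θ * Real.sin θ)*t^2 ≤ v.im := by
      have : v.im = 2*(w.re*w.im) + 2*((t*Real.cos θ)*(t*Real.sin θ)) := by
        rw [hv, Complex.add_im, hw2im, pow_two, Complex.mul_im]
        simp [Complex.mul_re, Complex.mul_im, Complex.exp_ofReal_mul_I_re,
          Complex.exp_ofReal_mul_I_im]
        ring
      rw [this]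
      have e2 := mul_nonneg hxn hyn
      constructor
      · nlinarith [mul_pos (mul_pos ht hct) (mul_pos ht hst)]
      · nlinarith []
    have hq := keyC θ w t hw h0 hθw hθ₀ hθ₁
    rw [← hv] at hq
    have hEim : ((u ^ ((1:ℂ)/2)) - (v ^ ((1:ℂ)/2))).im
        = (u ^ ((1:ℂ)/2)).im - (v ^ ((1:ℂ)/2)).im := Complex.sub_im _ _
    have hElow : (v ^ ((1:ℂ)/2)).im - ‖(u ^ ((1:ℂ)/2)) - (v ^ ((1:ℂ)/2))‖
        ≤ (u ^ ((1:ℂ)/2)).im := by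
      have h := Complex.abs_im_le_norm ((u ^ ((1:ℂ)/2)) - (v ^ ((1:ℂ)/2)))
      rw [hEim] at h
      cases' abs_le.mp h with h' _
      linarith
    have hEbound : ‖(u ^ ((1:ℂ)/2)) - (v ^ ((1:ℂ)/2))‖ ≤ C := by
      rcases le_or_gt t 1 with hle|hgt
      · calc ‖(u ^ ((1:ℂ)/2)) - (v ^ ((1:ℂ)/2))‖
            ≤ Real.sqrt (‖u - v‖) := halfLip u v himu himv.1
          _ ≤ Real.sqrt (4*a^2+4*a) := by
              apply Real.sqrt_le_sqrt
              have : 4*a*t ≤ 4*a := by nlinarith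
              linarith [habsuv]
          _ ≤ C := by rw [hCdef]; linarith [hsq2, ha]
      · set p := u ^ ((1:ℂ)/2) with hp
        set q := v ^ ((1:ℂ)/2) with hqd
        have hmul : (p - q) * (p + q) = u - v := by
          have e1 : p^2 = u := halfSq u
          have e2 : q^2 = v := halfSq v
          rw [← e1, ← e2]; ring
        have habsmul : ‖p - q‖ * ‖p + q‖ = ‖u - v‖ := by
          rw [← norm_mul, hmul]
        have hqabs : ‖q‖ = Real.sqrt (‖v‖) := by
          have e : (‖q‖)^2 = ‖v‖ := by
            rw [← norm_pow, halfSq]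
          rw [← e, Real.sqrt_sq (norm_nonneg _)]
        have hvlow : 2*(Real.cos θ * Real.sin θ)*t^2 ≤ ‖v‖ :=
          le_trans himv.2 (le_trans (le_abs_self _) (Complex.abs_im_le_norm v))
        have hqlow : Real.sqrt (2*(Real.cos θ * Real.sin θ))*t ≤ ‖q‖ := by
          rw [hqabs]
          calc Real.sqrt (2*(Real.cos θ * Real.sin θ))*t
              = Real.sqrt (2*(Real.cos θ * Real.sin θ)*t^2) := by
                rw [Real.sqrt_mul (by positivity) (t^2), Real.sqrt_sq ht.le]
            _ ≤ Real.sqrt (‖v‖) := Real.sqrt_le_sqrt hvlow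
        have hqple : ‖q‖ ≤ ‖p + q‖ :=
          (quadAdd p q (halfRe_nonneg u) (halfIm_nonneg u himu)
            (halfRe_nonneg v) (halfIm_nonneg v himv.1)).2
        have hDpos : 0 < Real.sqrt (2*(Real.cos θ * Real.sin θ)) := by
          apply Real.sqrt_pos.mpr; positivity
        have hchain : ‖p - q‖ * (Real.sqrt (2*(Real.cos θ * Real.sin θ))*t)
            ≤ (4*a^2+4*a)*t := by
          calc ‖p - q‖ * (Real.sqrt (2*(Real.cos θ * Real.sin θ))*t)
              ≤ ‖p - q‖ * ‖p + q‖ := by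
                apply mul_le_mul_of_nonneg_left _ (norm_nonneg _)
                exact le_trans hqlow hqple
            _ = ‖u - v‖ := habsmul
            _ ≤ 4*a^2 + 4*a*t := habsuv
            _ ≤ (4*a^2+4*a)*t := by nlinarith
        have hfin : ‖p - q‖ ≤ (4*a^2+4*a)/Real.sqrt (2*(Real.cos θ * Real.sin θ)) := by
          rw [le_div_iff₀ hDpos]
          nlinarith [hchain, ht, norm_nonneg (p - q), hDpos]
        calc ‖p - q‖ ≤ (4*a^2+4*a)/Real.sqrt (2*(Real.cos θ * Real.sin θ)) := hfin
          _ ≤ C := by rw [hCdef]; linarith [hsq1, ha]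
    linarith [hq, hElow, hEbound]
  -- Case -a ≤ s ≤ a
  · have hsc : ((s:ℂ) - (a:ℂ)) ^ 2 = (((s-a)^2 : ℝ) : ℂ) := by push_cast; ring
    set u : ℂ := w ^ 2 + ((s:ℂ) - (a:ℂ)) ^ 2 with hu
    have himu : 0 ≤ u.im := by
      rw [hu, hsc, Complex.add_im, Complex.ofReal_im]
      linarith [hw2imn]
    have hqim : ((w^2) ^ ((1:ℂ)/2)).im = w.im := by
      rw [halfIm _ hw2imn]
      have e1 : ‖w^2‖ = w.re^2 + w.im^2 := by
        rw [norm_pow, ← Complex.normSq_eq_norm_sq, Complex.normSq_apply]; ring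
      have e2 : (w^2).re = w.re^2 - w.im^2 := by
        rw [pow_two, Complex.mul_re]; ring
      rw [e1, e2, show (w.re^2 + w.im^2 - (w.re^2 - w.im^2))/2 = w.im^2 by ring,
        Real.sqrt_sq hyn]
    have hE : ‖(u ^ ((1:ℂ)/2)) - ((w^2) ^ ((1:ℂ)/2))‖ ≤ 2*a := by
      calc ‖(u ^ ((1:ℂ)/2)) - ((w^2) ^ ((1:ℂ)/2))‖
          ≤ Real.sqrt (‖u - w^2‖) := halfLip u (w^2) himu hw2imn
        _ = Real.sqrt ((s-a)^2) := by
            rw [show u - w^2 = (((s-a)^2 : ℝ) : ℂ) by rw [hu, hsc]; ring,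
              Complex.norm_real, Real.norm_eq_abs, _root_.abs_of_nonneg (sq_nonneg _)]
        _ = |s - a| := Real.sqrt_sq_eq_abs _
        _ ≤ 2*a := by
            rw [abs_sub_comm, _root_.abs_of_nonneg (by linarith : (0:ℝ) ≤ a - s)]
            push_neg at h1; linarith
    have hElow : ((w^2) ^ ((1:ℂ)/2)).im - ‖(u ^ ((1:ℂ)/2)) - ((w^2) ^ ((1:ℂ)/2))‖
        ≤ (u ^ ((1:ℂ)/2)).im := by
      have h := Complex.abs_im_le_norm ((u ^ ((1:ℂ)/2)) - ((w^2) ^ ((1:ℂ)/2)))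
      rw [Complex.sub_im] at h
      cases' abs_le.mp h with h' _
      linarith
    have h2aC : 2*a ≤ C := by rw [hCdef]; linarith [hsq1, hsq2]
    linarith [hElow, hE, hsC, hqim.ge, hqim.le]
  -- Case s > a
  · have hzeta : (a:ℂ) + ((s - a : ℝ) : ℂ) * Complex.exp ((θ:ℝ) * Complex.I) - (a:ℂ)
        = ((s - a : ℝ) : ℂ) * Complex.exp ((θ:ℝ) * Complex.I) := by ring
    rw [hzeta]
    have hq := keyC θ w (s - a) hw h0 hθw hθ₀ hθ₁
    linarith [hq, hCpos]
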